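/- If G is a minimal counterexample (as defined in the context), then G has no vertex of degree 3 that has both a neighbor of degree 1 and a neighbor of degree 2. -/

import Mathlib

set_option maxHeartbeats 1600000


open Set

/-- The degree of a vertex `v` in a simple graph `G`. -/
noncomputable def deg {V : Type*} (G : SimpleGraph V) (v : V) : ℕ :=
  (G.neighborSet v).ncard

/-- `S` is a dominating set of `G`: every vertex not in `S` has a neighbor in `S`. -/
def IsDomSet {V : Type*} (G : SimpleGraph V) (S : Set V) : Prop :=
  ∀ v ∉ S, ∃ u ∈ S, G.Adj u v

/-- `S` is an independent dominating set of `G`. -/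
def IsIndepDomSet {V : Type*} (G : SimpleGraph V) (S : Set V) : Prop :=
  IsDomSet G S ∧ ∀ u ∈ S, ∀ v ∈ S, ¬ G.Adj u v

/-- The independent domination number `i(G)`. -/
noncomputable def indepDomNum {V : Type*} (G : SimpleGraph V) : ℕ :=
  sInf {n | ∃ S : Set V, IsIndepDomSet G S ∧ S.ncard = n}

/-- The domination number `γ(G)`. -/
noncomputable def domNum {V : Type*} (G : SimpleGraph V) : ℕ :=
  sInf {n | ∃ S : Set V, IsDomSet G S ∧ S.ncard = n}

/-- `G` contains no cycle on 4 vertices as a subgraph. -/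
def NoFourCycle {V : Type*} (G : SimpleGraph V) : Prop :=
  ¬ ∃ a b c d : V, a ≠ b ∧ a ≠ c ∧ a ≠ d ∧ b ≠ c ∧ b ≠ d ∧ c ≠ d ∧
      G.Adj a b ∧ G.Adj b c ∧ G.Adj c d ∧ G.Adj d a

/-- `nk G k` is the number of vertices of degree `k` in `G`. -/
noncomputable def nk {V : Type*} (G : SimpleGraph V) (k : ℕ) : ℕ :=
  {v | deg G v = k}.ncard

/-- The weight of a vertex: 14, 9, 6, 5 according as its degree is 0, 1, 2, 3. -/
noncomputable def wt {V : Type*} (G : SimpleGraph V) (v : V) : ℕ :=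
  if deg G v = 0 then 14 else if deg G v = 1 then 9 else if deg G v = 2 then 6 else 5

/-- The weight of a set of vertices: the sum of their weights. -/
noncomputable def wtSet {V : Type*} (G : SimpleGraph V) (X : Set V) : ℕ :=
  ∑ᶠ v ∈ X, wt G v

/-- The weight of the whole graph `G`. -/
noncomputable def wtGraph {V : Type*} (G : SimpleGraph V) : ℕ :=
  wtSet G Set.univ

/-- `G` is a minimal counterexample: subcubic, no 4-cycle, `14·i(G) > w(G)`,
and every proper subgraph `H` of `G` satisfies `14·i(H) ≤ w(H)`. -/
def MinimalCounterexample {V : Type*} [Fintype V] (G : SimpleGraph V) : Prop :=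
  (∀ v, deg G v ≤ 3) ∧ NoFourCycle G ∧ wtGraph G < 14 * indepDomNum G ∧
    ∀ H : G.Subgraph, H ≠ ⊤ → 14 * indepDomNum H.coe ≤ wtGraph H.coe

section Aux

/-- weight as a function of the degree -/
noncomputable def wfun (d : ℕ) : ℕ :=
  if d = 0 then 14 else if d = 1 then 9 else if d = 2 then 6 else 5

/-- the increase of the weight of a vertex when its degree drops by one -/
noncomputable def bnd {V : Type*} (G : SimpleGraph V) (u : V) : ℕ :=
  if deg G u = 1 then 5 else if deg G u = 2 then 3 else 1

lemma wt_eq_wfun {V : Type*} (G : SimpleGraph V) (v : V) : wt G v = wfun (deg G v) := rfl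

lemma bnd_le_five {V : Type*} (G : SimpleGraph V) (u : V) : bnd G u ≤ 5 := by
  rw [bnd]; split_ifs <;> omega

lemma bnd_le_three {V : Type*} (G : SimpleGraph V) {u : V} (h : deg G u ≠ 1) :
    bnd G u ≤ 3 := by
  rw [bnd]; split_ifs <;> omega

lemma exists_isIndepDomSet {V : Type*} [Fintype V] (G : SimpleGraph V) :
    ∃ S : Set V, IsIndepDomSet G S := by
  classical
  set A : Set (Finset V) := {S | ∀ u ∈ S, ∀ w ∈ S, ¬ G.Adj u w} with hA
  have hfin : A.Finite := Set.toFinite A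
  have hne : A.Nonempty := ⟨∅, by simp [hA]⟩
  obtain ⟨S, hS, hmax⟩ := hfin.exists_maximalFor (fun s => s.card) A hne
  refine ⟨↑S, ?_, fun u hu w hw => hS u hu w hw⟩
  intro u hu
  by_contra hcon
  push_neg at hcon
  have huS : u ∉ S := by simpa using hu
  have hins : insert u S ∈ A := by
    intro x hx y hy
    simp only [Finset.mem_insert] at hx hy
    rcases hx with rfl | hx <;> rcases hy with rfl | hy
    · exact G.irrefl
    · intro h; exact hcon y (Finset.mem_coe.mpr hy) h.symm
    · intro h; exact hcon x (Finset.mem_coe.mpr hx) h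
    · exact hS x hx y hy
  have := hmax hins (by simp [Finset.card_insert_of_notMem huS])
  simp [Finset.card_insert_of_notMem huS] at this

lemma exists_min_indepDomSet {V : Type*} [Fintype V] (G : SimpleGraph V) :
    ∃ S : Set V, IsIndepDomSet G S ∧ S.ncard = indepDomNum G := by
  have hne : {n | ∃ S : Set V, IsIndepDomSet G S ∧ S.ncard = n}.Nonempty := by
    obtain ⟨S, hS⟩ := exists_isIndepDomSet G
    exact ⟨S.ncard, S, hS, rfl⟩
  exact Nat.sInf_mem hne

lemma indepDomNum_le {V : Type*} (G : SimpleGraph V) {S : Set V} (hS : IsIndepDomSet G S) :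
    indepDomNum G ≤ S.ncard :=
  Nat.sInf_le ⟨S, hS, rfl⟩

lemma main_step {V : Type*} [Fintype V] (G : SimpleGraph V)
    (hmin : ∀ H : G.Subgraph, H ≠ ⊤ → 14 * indepDomNum H.coe ≤ wtGraph H.coe)
    (D A : Set V) (hD : D.Nonempty) (hAD : A ⊆ D)
    (hAind : ∀ u ∈ A, ∀ w ∈ A, ¬ G.Adj u w)
    (hAcl : ∀ u ∈ A, ∀ w, G.Adj u w → w ∈ D)
    (hAdom : ∀ d ∈ D, d ∈ A ∨ ∃ u ∈ A, G.Adj u d)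
    (k : ℕ) (hk : A.ncard ≤ k)
    (hw : wtGraph ((⊤ : G.Subgraph).induce Dᶜ).coe + 14 * k ≤ wtGraph G) :
    14 * indepDomNum G ≤ wtGraph G := by
  classical
  set H : G.Subgraph := (⊤ : G.Subgraph).induce Dᶜ with hHdef
  have hHne : H ≠ ⊤ := by
    intro h
    obtain ⟨d, hd⟩ := hD
    have : H.verts = Set.univ := by rw [h]; rfl
    have : d ∈ (Dᶜ : Set V) := by
      rw [show (Dᶜ : Set V) = H.verts from rfl, this]; trivial
    exact this hd
  have hHadj : ∀ x y : H.verts, H.coe.Adj x y ↔ ((x : V) ∈ Dᶜ ∧ (y : V) ∈ Dᶜ ∧ G.Adj x y) := by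
    intro x y
    simp [hHdef, SimpleGraph.Subgraph.coe_adj, SimpleGraph.Subgraph.induce_adj]
  haveI : Fintype H.verts := Fintype.ofFinite _
  obtain ⟨T, hT, hTcard⟩ := exists_min_indepDomSet H.coe
  set S : Set V := (Subtype.val '' T) ∪ A with hSdef
  have hTsub : Subtype.val '' T ⊆ (Dᶜ : Set V) := by
    rintro _ ⟨x, _, rfl⟩; exact x.2
  have hSind : IsIndepDomSet G S := by
    constructor
    · intro u hu
      by_cases huD : u ∈ D
      · rcases hAdom u huD with h | ⟨w, hwA, hw⟩
        · exact absurd (Or.inr h) hu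
        · exact ⟨w, Or.inr hwA, hw⟩
      · have hx : (⟨u, huD⟩ : H.verts) ∉ T := by
          intro h
          exact hu (Or.inl ⟨⟨u, huD⟩, h, rfl⟩)
        obtain ⟨t, htT, hadj⟩ := hT.1 _ hx
        refine ⟨↑t, Or.inl ⟨t, htT, rfl⟩, ?_⟩
        exact ((hHadj t ⟨u, huD⟩).mp hadj).2.2
    · rintro p (⟨x, hxT, rfl⟩ | hpA) q (⟨y, hyT, rfl⟩ | hqA)
      · intro hadj
        exact hT.2 x hxT y hyT ((hHadj x y).mpr ⟨x.2, y.2, hadj⟩)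
      · intro hadj
        exact hTsub ⟨x, hxT, rfl⟩ (hAcl q hqA _ hadj.symm)
      · intro hadj
        exact hTsub ⟨y, hyT, rfl⟩ (hAcl p hpA _ hadj)
      · exact hAind p hpA q hqA
  have hdisj : Disjoint (Subtype.val '' T) A := by
    rw [Set.disjoint_left]
    intro x hx hxA
    exact hTsub hx (hAD hxA)
  have hcard : S.ncard ≤ indepDomNum H.coe + k := by
    rw [hSdef, Set.ncard_union_eq hdisj (Set.toFinite _) (Set.toFinite _)]
    have : (Subtype.val '' T).ncard = T.ncard :=
      Set.ncard_image_of_injective _ Subtype.val_injective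
    rw [this, hTcard]
    exact Nat.add_le_add_left hk _
  calc 14 * indepDomNum G ≤ 14 * S.ncard := by
        exact Nat.mul_le_mul_left _ (indepDomNum_le G hSind)
    _ ≤ 14 * (indepDomNum H.coe + k) := Nat.mul_le_mul_left _ hcard
    _ = 14 * indepDomNum H.coe + 14 * k := by ring
    _ ≤ wtGraph H.coe + 14 * k := Nat.add_le_add_right (hmin H hHne) _
    _ ≤ wtGraph G := hw

lemma finsum_mem_set_eq {V : Type*} [Fintype V] (s : Set V) (f : V → ℕ) :
    ∑ᶠ u ∈ s, f u = ∑ u ∈ s.toFinite.toFinset, f u := by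
  rw [← finsum_mem_coe_finset, Set.Finite.coe_toFinset]

lemma deg_induce {V : Type*} [Fintype V] (G : SimpleGraph V) (s : Set V)
    (x : ((⊤ : G.Subgraph).induce s).verts) :
    deg ((⊤ : G.Subgraph).induce s).coe x = (G.neighborSet ↑x ∩ s).ncard := by
  classical
  have hx : (x : V) ∈ s := x.2
  have himg : Subtype.val '' (((⊤ : G.Subgraph).induce s).coe.neighborSet x)
      = G.neighborSet ↑x ∩ s := by
    ext u
    simp only [Set.mem_image, SimpleGraph.mem_neighborSet, SimpleGraph.Subgraph.coe_adj,
      SimpleGraph.Subgraph.induce_adj, SimpleGraph.Subgraph.top_adj, Set.mem_inter_iff]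
    constructor
    · rintro ⟨y, ⟨-, hys, hadj⟩, rfl⟩
      exact ⟨hadj, hys⟩
    · rintro ⟨hadj, hu⟩
      exact ⟨⟨u, hu⟩, ⟨hx, hu, hadj⟩, rfl⟩
  rw [deg, ← Set.ncard_image_of_injective _ Subtype.val_injective, himg]

lemma wtGraph_induce {V : Type*} [Fintype V] (G : SimpleGraph V) (s : Set V) :
    wtGraph ((⊤ : G.Subgraph).induce s).coe
      = ∑ᶠ u ∈ s, wfun ((G.neighborSet u ∩ s).ncard) := by
  classical
  rw [wtGraph, wtSet, finsum_mem_univ]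
  have h1 : ∀ x : ((⊤ : G.Subgraph).induce s).verts,
      wt ((⊤ : G.Subgraph).induce s).coe x = wfun ((G.neighborSet ↑x ∩ s).ncard) := by
    intro x
    rw [wt_eq_wfun, deg_induce]
  rw [finsum_congr h1]
  exact finsum_set_coe_eq_finsum_mem (f := fun u => wfun ((G.neighborSet u ∩ s).ncard)) s

lemma weight_step {V : Type*} [Fintype V] (G : SimpleGraph V) (D E : Set V)
    (hE : ∀ u ∈ E, u ∉ D)
    (hout : ∀ u, u ∉ D → u ∉ E → G.neighborSet u ∩ D = ∅)
    (k : ℕ)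
    (hnum : (∑ᶠ u ∈ E, wfun ((G.neighborSet u ∩ Dᶜ).ncard)) + 14 * k
        ≤ (∑ᶠ u ∈ E, wt G u) + ∑ᶠ u ∈ D, wt G u) :
    wtGraph ((⊤ : G.Subgraph).induce Dᶜ).coe + 14 * k ≤ wtGraph G := by
  classical
  rw [wtGraph_induce]
  rw [finsum_mem_set_eq, finsum_mem_set_eq, finsum_mem_set_eq] at *
  set DF := D.toFinite.toFinset with hDF
  set CF := Dᶜ.toFinite.toFinset with hCF
  set EF := E.toFinite.toFinset with hEF
  have hEsub : EF ⊆ CF := by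
    intro u hu
    simp only [hEF, hCF, Set.Finite.mem_toFinset, Set.mem_compl_iff] at *
    exact hE u hu
  have hsplit2 : ∑ u ∈ CF \ EF, wfun ((G.neighborSet u ∩ Dᶜ).ncard)
        + ∑ u ∈ EF, wfun ((G.neighborSet u ∩ Dᶜ).ncard)
      = ∑ u ∈ CF, wfun ((G.neighborSet u ∩ Dᶜ).ncard) := Finset.sum_sdiff hEsub
  have hsplit3 : ∑ u ∈ CF \ EF, wt G u + ∑ u ∈ EF, wt G u
      = ∑ u ∈ CF, wt G u := Finset.sum_sdiff hEsub
  have hsame : ∑ u ∈ CF \ EF, wfun ((G.neighborSet u ∩ Dᶜ).ncard)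
      = ∑ u ∈ CF \ EF, wt G u := by
    apply Finset.sum_congr rfl
    intro u hu
    simp only [Finset.mem_sdiff, hCF, hEF, Set.Finite.mem_toFinset, Set.mem_compl_iff] at hu
    have hND : G.neighborSet u ∩ D = ∅ := hout u hu.1 hu.2
    have heq : G.neighborSet u ∩ Dᶜ = G.neighborSet u := by
      apply Set.inter_eq_left.mpr
      intro t ht htD
      exact Set.eq_empty_iff_forall_notMem.mp hND t ⟨ht, htD⟩
    rw [heq]
    exact (wt_eq_wfun G u).symm
  have hG : wtGraph G = ∑ u ∈ DF, wt G u + ∑ u ∈ CF, wt G u := by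
    rw [wtGraph, wtSet, finsum_mem_univ, finsum_eq_sum_of_fintype]
    rw [← Finset.sum_add_sum_compl DF (wt G)]
    congr 1
    apply Finset.sum_congr _ (fun _ _ => rfl)
    ext u
    simp [hDF, hCF, Set.Finite.mem_toFinset]
  rw [hG]
  omega

lemma wtH_drop {V : Type*} [Fintype V] (G : SimpleGraph V) (D : Set V) (u : V)
    (h1 : (G.neighborSet u ∩ D).ncard = 1) (h3 : deg G u ≤ 3) :
    wfun ((G.neighborSet u ∩ Dᶜ).ncard) = wt G u + bnd G u := by
  have hsplit := Set.ncard_inter_add_ncard_diff_eq_ncard (G.neighborSet u) D (Set.toFinite _)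
  rw [Set.diff_eq, h1] at hsplit
  have hle : 1 ≤ deg G u := by
    rw [← h1, deg]
    exact Set.ncard_le_ncard Set.inter_subset_left (Set.toFinite _)
  have hdeg : (G.neighborSet u ∩ Dᶜ).ncard = deg G u - 1 := by
    rw [deg] at *; omega
  have hd : deg G u = 1 ∨ deg G u = 2 ∨ deg G u = 3 := by omega
  rcases hd with h | h | h <;>
    · rw [hdeg, wt_eq_wfun, bnd, h]; norm_num [wfun]

lemma single_elt {α : Type*} {S : Set α} {a : α} (h : S.ncard = 1) (ha : a ∈ S) :
    S = {a} := by
  obtain ⟨x, rfl⟩ := Set.ncard_eq_one.mp h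
  simp_all

lemma other_elt {α : Type*} {S : Set α} {a : α} (h : S.ncard = 2) (ha : a ∈ S) :
    ∃ b, b ≠ a ∧ S = {a, b} := by
  obtain ⟨x, y, hxy, rfl⟩ := Set.ncard_eq_two.mp h
  simp only [Set.mem_insert_iff, Set.mem_singleton_iff] at ha
  rcases ha with rfl | rfl
  · exact ⟨y, fun h => hxy h.symm, rfl⟩
  · exact ⟨x, fun h => hxy h, by rw [Set.pair_comm]⟩

lemma third_elt {α : Type*} {S : Set α} {a b : α} (h : S.ncard = 3) (ha : a ∈ S)
    (hb : b ∈ S) (hab : a ≠ b) : ∃ c, c ≠ a ∧ c ≠ b ∧ S = {a, b, c} := by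
  obtain ⟨x, y, z, hxy, hxz, hyz, rfl⟩ := Set.ncard_eq_three.mp h
  simp only [Set.mem_insert_iff, Set.mem_singleton_iff] at ha hb
  rcases ha with rfl | rfl | rfl <;> rcases hb with rfl | rfl | rfl <;>
    first
      | exact absurd rfl hab
      | exact ⟨x, by tauto, by tauto, by ext t; simp; try tauto⟩
      | exact ⟨y, by tauto, by tauto, by ext t; simp; try tauto⟩
      | exact ⟨z, by tauto, by tauto, by ext t; simp; try tauto⟩

lemma sum_insert_le' {α : Type*} [DecidableEq α] (f : α → ℕ) (a : α) (s : Finset α) :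
    ∑ u ∈ insert a s, f u ≤ f a + ∑ u ∈ s, f u := by
  by_cases h : a ∈ s
  · rw [Finset.insert_eq_self.mpr h]; exact Nat.le_add_left _ _
  · rw [Finset.sum_insert h]

end Aux


lemma rest_two {α : Type*} {S : Set α} {a : α} (h : S.ncard = 3) (ha : a ∈ S) :
    ∃ x y, x ≠ a ∧ y ≠ a ∧ x ≠ y ∧ S = {a, x, y} := by
  obtain ⟨p, q, r, hpq, hpr, hqr, rfl⟩ := Set.ncard_eq_three.mp h
  simp only [Set.mem_insert_iff, Set.mem_singleton_iff] at ha
  rcases ha with rfl | rfl | rfl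
  · exact ⟨q, r, Ne.symm hpq, Ne.symm hpr, hqr, rfl⟩
  · exact ⟨p, r, hpq, Ne.symm hqr, hpr, by ext t; simp; try tauto⟩
  · exact ⟨p, q, hpr, hqr, hpq, by ext t; simp; try tauto⟩

lemma wfun_one : wfun 1 = 9 := by norm_num [wfun]
lemma wfun_two : wfun 2 = 6 := by norm_num [wfun]
lemma wfun_three : wfun 3 = 5 := by norm_num [wfun]

lemma case_D4 {V : Type*} [Fintype V] (G : SimpleGraph V)
    (hsub : ∀ u, deg G u ≤ 3) (hC4 : NoFourCycle G)
    (hmin : ∀ H : G.Subgraph, H ≠ ⊤ → 14 * indepDomNum H.coe ≤ wtGraph H.coe)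
    (v a b c : V)
    (hv3 : deg G v = 3) (ha1 : deg G a = 1) (hb2 : deg G b = 2)
    (hNv : G.neighborSet v = {a, b, c}) (hNa : G.neighborSet a = {v})
    (hca : c ≠ a) (hcb : c ≠ b)
    (E' : Finset V)
    (hE' : ∀ u, u ∉ ({v, a, b, c} : Set V) → (G.Adj b u ∨ G.Adj c u) → u ∈ E')
    (hB : ∑ u ∈ E', bnd G u + 14 ≤ 20 + wt G c) :
    14 * indepDomNum G ≤ wtGraph G := by
  classical
  have hva : G.Adj v a := by rw [← SimpleGraph.mem_neighborSet, hNv]; simp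
  have hvb : G.Adj v b := by rw [← SimpleGraph.mem_neighborSet, hNv]; simp
  have hvc : G.Adj v c := by rw [← SimpleGraph.mem_neighborSet, hNv]; simp
  have hab : a ≠ b := by intro h; rw [h, hb2] at ha1; omega
  set D : Set V := {v, a, b, c} with hD
  have hmemD : ∀ u, u ∈ D ↔ (u = v ∨ u = a ∨ u = b ∨ u = c) := by
    intro u; simp [hD]
  have hadj_v : ∀ u, G.Adj v u → u ∈ D := by
    intro u h
    have h' : u ∈ G.neighborSet v := h
    rw [hNv] at h'
    rw [hmemD]
    simp only [Set.mem_insert_iff, Set.mem_singleton_iff] at h'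
    tauto
  have hadj_a : ∀ u, G.Adj a u → u = v := by
    intro u h
    have h' : u ∈ G.neighborSet a := h
    rw [hNa] at h'
    simpa using h'
  have hdrop : ∀ u ∈ (G.neighborSet b ∪ G.neighborSet c) \ D,
      (G.neighborSet u ∩ D).ncard = 1 := by
    rintro u ⟨hu1, hu2⟩
    have hu2' := hu2
    rw [hmemD] at hu2'
    push_neg at hu2'
    obtain ⟨huv, hua, hub, huc⟩ := hu2'
    have hnotboth : ¬ (G.Adj b u ∧ G.Adj c u) := by
      rintro ⟨h1, h2⟩
      exact hC4 ⟨v, b, u, c, hvb.ne, Ne.symm huv, hvc.ne, h1.ne, Ne.symm hcb, huc,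
        hvb, h1, h2.symm, hvc.symm⟩
    rcases hu1 with hmb | hmc
    · have hadjbu : G.Adj b u := hmb
      have hset : G.neighborSet u ∩ D = {b} := by
        ext t
        constructor
        · rintro ⟨hadj, htD⟩
          have hadj' : G.Adj u t := hadj
          rw [hmemD] at htD
          rcases htD with rfl | rfl | rfl | rfl
          · exact absurd (hadj_v u hadj'.symm) hu2
          · exact absurd (hadj_a u hadj'.symm) huv
          · rfl
          · exact absurd ⟨hadjbu, hadj'.symm⟩ hnotboth
        · intro ht
          rw [Set.mem_singleton_iff] at ht
          subst ht
          exact ⟨hadjbu.symm, by rw [hmemD]; tauto⟩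
      rw [hset]
      exact Set.ncard_singleton b
    · have hadjcu : G.Adj c u := hmc
      have hset : G.neighborSet u ∩ D = {c} := by
        ext t
        constructor
        · rintro ⟨hadj, htD⟩
          have hadj' : G.Adj u t := hadj
          rw [hmemD] at htD
          rcases htD with rfl | rfl | rfl | rfl
          · exact absurd (hadj_v u hadj'.symm) hu2
          · exact absurd (hadj_a u hadj'.symm) huv
          · exact absurd ⟨hadj'.symm, hadjcu⟩ hnotboth
          · rfl
        · intro ht
          rw [Set.mem_singleton_iff] at ht
          subst ht
          exact ⟨hadjcu.symm, by rw [hmemD]; tauto⟩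
      rw [hset]
      exact Set.ncard_singleton c
  have hout : ∀ u, u ∉ D → u ∉ (G.neighborSet b ∪ G.neighborSet c) \ D →
      G.neighborSet u ∩ D = ∅ := by
    intro u huD huE
    rw [Set.eq_empty_iff_forall_notMem]
    rintro t ⟨hadj, htD⟩
    have hadj' : G.Adj u t := hadj
    rw [hmemD] at htD
    rcases htD with rfl | rfl | rfl | rfl
    · exact huD (hadj_v u hadj'.symm)
    · exact huD (by rw [hmemD]; exact Or.inl (hadj_a u hadj'.symm))
    · exact huE ⟨Or.inl hadj'.symm, huD⟩
    · exact huE ⟨Or.inr hadj'.symm, huD⟩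
  have hwv : wt G v = 5 := by rw [wt_eq_wfun, hv3, wfun_three]
  have hwa : wt G a = 9 := by rw [wt_eq_wfun, ha1, wfun_one]
  have hwb : wt G b = 6 := by rw [wt_eq_wfun, hb2, wfun_two]
  have hDsum : ∑ᶠ u ∈ D, wt G u = wt G v + (wt G a + (wt G b + wt G c)) := by
    rw [hD]
    rw [finsum_mem_insert _ (by
        simp only [Set.mem_insert_iff, Set.mem_singleton_iff]
        push_neg
        exact ⟨hva.ne, hvb.ne, hvc.ne⟩) (Set.toFinite _)]
    rw [finsum_mem_insert _ (by
        simp only [Set.mem_insert_iff, Set.mem_singleton_iff]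
        push_neg
        exact ⟨hab, Ne.symm hca⟩) (Set.toFinite _)]
    rw [finsum_mem_insert _ (by
        simp only [Set.mem_singleton_iff]
        exact Ne.symm hcb) (Set.toFinite _)]
    rw [finsum_mem_singleton]
  set E : Set V := (G.neighborSet b ∪ G.neighborSet c) \ D with hE
  have h1 : ∑ᶠ u ∈ E, wfun ((G.neighborSet u ∩ Dᶜ).ncard)
      = ∑ᶠ u ∈ E, (wt G u + bnd G u) :=
    finsum_mem_congr rfl (fun u hu => wtH_drop G D u (hdrop u hu) (hsub u))
  have h2 : ∑ᶠ u ∈ E, (wt G u + bnd G u)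
      = (∑ᶠ u ∈ E, wt G u) + ∑ᶠ u ∈ E, bnd G u :=
    finsum_mem_add_distrib (Set.toFinite E)
  have h3 : ∑ᶠ u ∈ E, bnd G u ≤ ∑ u ∈ E', bnd G u := by
    rw [finsum_mem_set_eq]
    apply Finset.sum_le_sum_of_subset
    intro u hu
    rw [Set.Finite.mem_toFinset] at hu
    obtain ⟨hu1, hu2⟩ := hu
    refine hE' u hu2 ?_
    rcases hu1 with h | h
    · exact Or.inl h
    · exact Or.inr h
  have hAsub : ({v} : Set V) ⊆ D := by
    intro x hx
    rw [Set.mem_singleton_iff] at hx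
    subst hx
    rw [hmemD]; tauto
  have hAind : ∀ u ∈ ({v} : Set V), ∀ w ∈ ({v} : Set V), ¬ G.Adj u w := by
    rintro u hu w hw
    rw [Set.mem_singleton_iff] at hu hw
    subst hu; subst hw
    exact G.irrefl
  have hAcl : ∀ u ∈ ({v} : Set V), ∀ w, G.Adj u w → w ∈ D := by
    rintro u hu w h
    rw [Set.mem_singleton_iff] at hu
    subst hu
    exact hadj_v w h
  have hAdom : ∀ d ∈ D, d ∈ ({v} : Set V) ∨ ∃ u ∈ ({v} : Set V), G.Adj u d := by
    intro d hd
    rw [hmemD] at hd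
    rcases hd with rfl | rfl | rfl | rfl
    · exact Or.inl rfl
    · exact Or.inr ⟨v, rfl, hva⟩
    · exact Or.inr ⟨v, rfl, hvb⟩
    · exact Or.inr ⟨v, rfl, hvc⟩
  apply main_step G hmin D {v} ⟨v, by rw [hmemD]; tauto⟩ hAsub hAind hAcl hAdom 1
    (by simp)
  apply weight_step G D E (fun u hu => hu.2) hout 1
  rw [h1, h2, hDsum, hwv, hwa, hwb]
  omega

/-- A minimal counterexample has no vertex of degree 3 with both a neighbor of
degree 1 and a neighbor of degree 2. -/
theorem no_deg_three_vertex_with_deg_one_and_deg_two_neighbors {V : Type*} [Fintype V]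
    (G : SimpleGraph V) (hG : MinimalCounterexample G) :
    ¬ ∃ v a b : V, deg G v = 3 ∧ G.Adj v a ∧ G.Adj v b ∧ deg G a = 1 ∧ deg G b = 2 := by
  classical
  rintro ⟨v, a, b, hv3, hva, hvb, ha1, hb2⟩
  obtain ⟨hsub, hC4, hbig, hmin⟩ := hG
  suffices hcontra : 14 * indepDomNum G ≤ wtGraph G by omega
  have hab : a ≠ b := by intro h; rw [h, hb2] at ha1; omega
  have hNa : G.neighborSet a = {v} := single_elt ha1 hva.symm
  obtain ⟨b', hb'v, hNb⟩ := other_elt hb2 hvb.symm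
  obtain ⟨c, hca, hcb, hNv⟩ := third_elt hv3 hva hvb hab
  have hvc : G.Adj v c := by rw [← SimpleGraph.mem_neighborSet, hNv]; simp
  have hbb' : G.Adj b b' := by rw [← SimpleGraph.mem_neighborSet, hNb]; simp
  have hadj_a : ∀ u, G.Adj a u → u = v := by
    intro u h
    have h' : u ∈ G.neighborSet a := h
    rw [hNa] at h'
    simpa using h'
  have hadj_b : ∀ u, G.Adj b u → u = v ∨ u = b' := by
    intro u h
    have h' : u ∈ G.neighborSet b := h
    rw [hNb] at h'
    simpa using h'
  have hadj_v : ∀ u, G.Adj v u → u = a ∨ u = b ∨ u = c := by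
    intro u h
    have h' : u ∈ G.neighborSet v := h
    rw [hNv] at h'
    simpa using h'
  have hb'a : b' ≠ a := by
    intro h
    subst h
    have := hadj_a b hbb'.symm
    exact hvb.ne this.symm
  have hwv : wt G v = 5 := by rw [wt_eq_wfun, hv3, wfun_three]
  have hwa : wt G a = 9 := by rw [wt_eq_wfun, ha1, wfun_one]
  have hwb : wt G b = 6 := by rw [wt_eq_wfun, hb2, wfun_two]
  have hc3 : deg G c ≤ 3 := hsub c
  have hc1 : 1 ≤ deg G c := (Set.ncard_pos (Set.toFinite _)).mpr ⟨v, hvc.symm⟩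
  have hcc : deg G c = 1 ∨ deg G c = 2 ∨ deg G c = 3 := by omega
  rcases hcc with hc | hc | hc
  -- ===== deg c = 1 =====
  · have hNc : G.neighborSet c = {v} := single_elt hc hvc.symm
    have hadj_c : ∀ u, G.Adj c u → u = v := by
      intro u h
      have h' : u ∈ G.neighborSet c := h
      rw [hNc] at h'
      simpa using h'
    apply case_D4 G hsub hC4 hmin v a b c hv3 ha1 hb2 hNv hNa hca hcb {b'}
    · intro u huD hadj
      rcases hadj with h | h
      · rcases hadj_b u h with rfl | rfl
        · exact absurd (by simp : u ∈ ({u, a, b, c} : Set V)) huD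
        · simp
      · rcases hadj_c u h with rfl
        exact absurd (by simp : u ∈ ({u, a, b, c} : Set V)) huD
    · have h9 : wt G c = 9 := by rw [wt_eq_wfun, hc, wfun_one]
      rw [h9, Finset.sum_singleton]
      have := bnd_le_five G b'
      omega
  -- ===== deg c = 2 =====
  · obtain ⟨c', hc'v, hNc⟩ := other_elt hc hvc.symm
    have hadj_c : ∀ u, G.Adj c u → u = v ∨ u = c' := by
      intro u h
      have h' : u ∈ G.neighborSet c := h
      rw [hNc] at h'
      simpa using h'
    apply case_D4 G hsub hC4 hmin v a b c hv3 ha1 hb2 hNv hNa hca hcb (insert b' {c'})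
    · intro u huD hadj
      rcases hadj with h | h
      · rcases hadj_b u h with rfl | rfl
        · exact absurd (by simp : u ∈ ({u, a, b, c} : Set V)) huD
        · simp
      · rcases hadj_c u h with rfl | rfl
        · exact absurd (by simp : u ∈ ({u, a, b, c} : Set V)) huD
        · simp
    · have h6 : wt G c = 6 := by rw [wt_eq_wfun, hc, wfun_two]
      have hle : ∑ u ∈ insert b' {c'}, bnd G u ≤ bnd G b' + ∑ u ∈ {c'}, bnd G u :=
        sum_insert_le' _ _ _
      rw [Finset.sum_singleton] at hle
      have h5 := bnd_le_five G b'
      have h5' := bnd_le_five G c'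
      rw [h6]
      omega
  -- ===== deg c = 3 =====
  · obtain ⟨x, y, hxv, hyv, hxy, hNc⟩ := rest_two hc hvc.symm
    have hadj_c : ∀ u, G.Adj c u → u = v ∨ u = x ∨ u = y := by
      intro u h
      have h' : u ∈ G.neighborSet c := h
      rw [hNc] at h'
      simpa using h'
    have hcx : G.Adj c x := by rw [← SimpleGraph.mem_neighborSet, hNc]; simp
    have hcy : G.Adj c y := by rw [← SimpleGraph.mem_neighborSet, hNc]; simp
    have hwc : wt G c = 5 := by rw [wt_eq_wfun, hc, wfun_three]
    by_cases hb'1 : deg G b' = 1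
    -- ===== CASE 2 : b' is a leaf, deg c = 3; delete {v,a,b,b'}, add {a,b} =====
    · have hNb' : G.neighborSet b' = {b} := single_elt hb'1 hbb'.symm
      have hadj_b' : ∀ u, G.Adj b' u → u = b := by
        intro u h
        have h' : u ∈ G.neighborSet b' := h
        rw [hNb'] at h'
        simpa using h'
      have hb'c : b' ≠ c := by intro h; rw [h, hc] at hb'1; omega
      set D : Set V := {v, a, b, b'} with hD
      have hmemD : ∀ u, u ∈ D ↔ (u = v ∨ u = a ∨ u = b ∨ u = b') := by
        intro u; simp [hD]
      have hcD : c ∉ D := by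
        rw [hmemD]
        push_neg
        exact ⟨fun h => hvc.ne h.symm, hca, hcb, fun h => hb'c h.symm⟩
      have hwb' : wt G b' = 9 := by rw [wt_eq_wfun, hb'1, wfun_one]
      have hcdrop : G.neighborSet c ∩ D = {v} := by
        ext t
        constructor
        · rintro ⟨hadj, htD⟩
          have hadj' : G.Adj c t := hadj
          rw [hmemD] at htD
          rcases htD with rfl | rfl | rfl | rfl
          · rfl
          · exact absurd (hadj_a c hadj'.symm) (fun h => hvc.ne h.symm)
          · rcases hadj_b c hadj'.symm with h | h
            · exact absurd h (fun h => hvc.ne h.symm)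
            · exact absurd h (fun h => hb'c h.symm)
          · exact absurd (hadj_b' c hadj'.symm) hcb
        · intro ht
          rw [Set.mem_singleton_iff] at ht
          subst ht
          exact ⟨hvc.symm, by rw [hmemD]; tauto⟩
      have hout : ∀ u, u ∉ D → u ∉ ({c} : Set V) → G.neighborSet u ∩ D = ∅ := by
        intro u huD huE
        rw [Set.mem_singleton_iff] at huE
        rw [Set.eq_empty_iff_forall_notMem]
        rintro t ⟨hadj, htD⟩
        have hadj' : G.Adj u t := hadj
        rw [hmemD] at htD
        rcases htD with rfl | rfl | rfl | rfl
        · rcases hadj_v u hadj'.symm with rfl | rfl | rfl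
          · exact huD (by rw [hmemD]; tauto)
          · exact huD (by rw [hmemD]; tauto)
          · exact huE rfl
        · exact huD (by rw [hmemD]; exact Or.inl (hadj_a u hadj'.symm))
        · rcases hadj_b u hadj'.symm with rfl | rfl
          · exact huD (by rw [hmemD]; tauto)
          · exact huD (by rw [hmemD]; tauto)
        · exact huD (by rw [hmemD]; exact Or.inr (Or.inr (Or.inl (hadj_b' u hadj'.symm))))
      have hDsum : ∑ᶠ u ∈ D, wt G u = wt G v + (wt G a + (wt G b + wt G b')) := by
        rw [hD]
        rw [finsum_mem_insert _ (by
            simp only [Set.mem_insert_iff, Set.mem_singleton_iff]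
            push_neg
            exact ⟨hva.ne, hvb.ne, fun h => hb'v h.symm⟩) (Set.toFinite _)]
        rw [finsum_mem_insert _ (by
            simp only [Set.mem_insert_iff, Set.mem_singleton_iff]
            push_neg
            exact ⟨hab, fun h => hb'a h.symm⟩) (Set.toFinite _)]
        rw [finsum_mem_insert _ (by
            simp only [Set.mem_singleton_iff]
            exact hbb'.ne) (Set.toFinite _)]
        rw [finsum_mem_singleton]
      have hbndc : bnd G c = 1 := by rw [bnd, hc]; norm_num
      have hAsub : ({a, b} : Set V) ⊆ D := by
        intro t ht
        rcases ht with rfl | ht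
        · rw [hmemD]; tauto
        · rw [Set.mem_singleton_iff] at ht; subst ht; rw [hmemD]; tauto
      have hnab : ¬ G.Adj a b := by
        intro h
        exact hvb.ne (hadj_a b h).symm
      have hAind : ∀ u ∈ ({a, b} : Set V), ∀ w ∈ ({a, b} : Set V), ¬ G.Adj u w := by
        rintro u hu w hw
        rcases hu with rfl | hu
        · rcases hw with rfl | hw
          · exact G.irrefl
          · rw [Set.mem_singleton_iff] at hw; subst hw; exact hnab
        · rw [Set.mem_singleton_iff] at hu; subst hu
          rcases hw with rfl | hw
          · exact fun h => hnab h.symm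
          · rw [Set.mem_singleton_iff] at hw; subst hw; exact G.irrefl
      have hAcl : ∀ u ∈ ({a, b} : Set V), ∀ w, G.Adj u w → w ∈ D := by
        rintro u hu w h
        rcases hu with rfl | hu
        · rw [hmemD]; exact Or.inl (hadj_a w h)
        · rw [Set.mem_singleton_iff] at hu; subst hu
          rcases hadj_b w h with rfl | rfl
          · rw [hmemD]; tauto
          · rw [hmemD]; tauto
      have hAdom : ∀ d ∈ D, d ∈ ({a, b} : Set V) ∨ ∃ u ∈ ({a, b} : Set V), G.Adj u d := by
        intro d hd
        rw [hmemD] at hd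
        rcases hd with rfl | rfl | rfl | rfl
        · exact Or.inr ⟨b, Or.inr rfl, hvb.symm⟩
        · exact Or.inl (Or.inl rfl)
        · exact Or.inl (Or.inr rfl)
        · exact Or.inr ⟨b, Or.inr rfl, hbb'⟩
      apply main_step G hmin D {a, b} ⟨v, by rw [hmemD]; tauto⟩ hAsub hAind hAcl hAdom 2
        (by rw [Set.ncard_pair hab])
      apply weight_step G D {c} (by intro u hu; rw [Set.mem_singleton_iff] at hu; subst hu; exact hcD)
        hout 2
      rw [finsum_mem_singleton, finsum_mem_singleton, hDsum, hwv, hwa, hwb, hwb',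
        wtH_drop G D c (by rw [hcdrop, Set.ncard_singleton]) (hsub c), hwc, hbndc]
      all_goals omega
    -- ===== deg c = 3, b' not a leaf =====
    · by_cases hxy1 : deg G x = 1 ∧ deg G y = 1
      -- ===== CASE 3 : x,y leaves; delete {v,a,c,x,y}, add {a,c} =====
      · obtain ⟨hx1, hy1⟩ := hxy1
        have hNx : G.neighborSet x = {c} := single_elt hx1 hcx.symm
        have hNy : G.neighborSet y = {c} := single_elt hy1 hcy.symm
        have hadj_x : ∀ u, G.Adj x u → u = c := by
          intro u h
          have h' : u ∈ G.neighborSet x := h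
          rw [hNx] at h'
          simpa using h'
        have hadj_y : ∀ u, G.Adj y u → u = c := by
          intro u h
          have h' : u ∈ G.neighborSet y := h
          rw [hNy] at h'
          simpa using h'
        have hxa : x ≠ a := by
          intro h
          subst h
          exact hvc.ne (hadj_a c hcx.symm).symm
        have hya : y ≠ a := by
          intro h
          subst h
          exact hvc.ne (hadj_a c hcy.symm).symm
        have hbx : b ≠ x := by intro h; rw [← h, hb2] at hx1; omega
        have hby : b ≠ y := by intro h; rw [← h, hb2] at hy1; omega
        set D : Set V := {v, a, c, x, y} with hD
        have hmemD : ∀ u, u ∈ D ↔ (u = v ∨ u = a ∨ u = c ∨ u = x ∨ u = y) := by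
          intro u; simp [hD]
        have hbD : b ∉ D := by
          rw [hmemD]
          push_neg
          exact ⟨fun h => hvb.ne h.symm, fun h => hab h.symm, fun h => hcb h.symm, hbx, hby⟩
        have hwx : wt G x = 9 := by rw [wt_eq_wfun, hx1, wfun_one]
        have hwy : wt G y = 9 := by rw [wt_eq_wfun, hy1, wfun_one]
        have hb'D : b' ∉ D := by
          rw [hmemD]
          push_neg
          refine ⟨hb'v, hb'a, ?_, ?_, ?_⟩
          · intro h
            subst h
            rcases hadj_c b hbb'.symm with h | h | h
            · exact hvb.ne h.symm
            · exact hbx h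
            · exact hby h
          · intro h
            subst h
            exact hcb (hadj_x b hbb'.symm).symm
          · intro h
            subst h
            exact hcb (hadj_y b hbb'.symm).symm
        have hbdrop : G.neighborSet b ∩ D = {v} := by
          ext t
          constructor
          · rintro ⟨hadj, htD⟩
            have hadj' : G.Adj b t := hadj
            rcases hadj_b t hadj' with rfl | rfl
            · rfl
            · exact absurd htD hb'D
          · intro ht
            rw [Set.mem_singleton_iff] at ht
            subst ht
            exact ⟨hvb.symm, by rw [hmemD]; tauto⟩
        have hout : ∀ u, u ∉ D → u ∉ ({b} : Set V) → G.neighborSet u ∩ D = ∅ := by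
          intro u huD huE
          rw [Set.mem_singleton_iff] at huE
          rw [Set.eq_empty_iff_forall_notMem]
          rintro t ⟨hadj, htD⟩
          have hadj' : G.Adj u t := hadj
          rw [hmemD] at htD
          rcases htD with rfl | rfl | rfl | rfl | rfl
          · rcases hadj_v u hadj'.symm with rfl | rfl | rfl
            · exact huD (by rw [hmemD]; tauto)
            · exact huE rfl
            · exact huD (by rw [hmemD]; tauto)
          · exact huD (by rw [hmemD]; exact Or.inl (hadj_a u hadj'.symm))
          · rcases hadj_c u hadj'.symm with rfl | rfl | rfl
            · exact huD (by rw [hmemD]; tauto)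
            · exact huD (by rw [hmemD]; tauto)
            · exact huD (by rw [hmemD]; tauto)
          · exact huD (by rw [hmemD]; exact Or.inr (Or.inr (Or.inl (hadj_x u hadj'.symm))))
          · exact huD (by rw [hmemD]; exact Or.inr (Or.inr (Or.inl (hadj_y u hadj'.symm))))
        have hDsum : ∑ᶠ u ∈ D, wt G u
            = wt G v + (wt G a + (wt G c + (wt G x + wt G y))) := by
          rw [hD]
          rw [finsum_mem_insert _ (by
              simp only [Set.mem_insert_iff, Set.mem_singleton_iff]
              push_neg
              exact ⟨hva.ne, hvc.ne, fun h => hxv h.symm, fun h => hyv h.symm⟩)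
            (Set.toFinite _)]
          rw [finsum_mem_insert _ (by
              simp only [Set.mem_insert_iff, Set.mem_singleton_iff]
              push_neg
              exact ⟨fun h => hca h.symm, fun h => hxa h.symm, fun h => hya h.symm⟩)
            (Set.toFinite _)]
          rw [finsum_mem_insert _ (by
              simp only [Set.mem_insert_iff, Set.mem_singleton_iff]
              push_neg
              exact ⟨hcx.ne, hcy.ne⟩) (Set.toFinite _)]
          rw [finsum_mem_insert _ (by
              simp only [Set.mem_singleton_iff]
              exact hxy) (Set.toFinite _)]
          rw [finsum_mem_singleton]
        have hbndb : bnd G b = 3 := by rw [bnd, hb2]; norm_num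
        have hnac : ¬ G.Adj a c := by
          intro h
          exact hvc.ne (hadj_a c h).symm
        have hAsub : ({a, c} : Set V) ⊆ D := by
          intro t ht
          rcases ht with rfl | ht
          · rw [hmemD]; tauto
          · rw [Set.mem_singleton_iff] at ht; subst ht; rw [hmemD]; tauto
        have hAind : ∀ u ∈ ({a, c} : Set V), ∀ w ∈ ({a, c} : Set V), ¬ G.Adj u w := by
          rintro u hu w hw
          rcases hu with rfl | hu
          · rcases hw with rfl | hw
            · exact G.irrefl
            · rw [Set.mem_singleton_iff] at hw; subst hw; exact hnac
          · rw [Set.mem_singleton_iff] at hu; subst hu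
            rcases hw with rfl | hw
            · exact fun h => hnac h.symm
            · rw [Set.mem_singleton_iff] at hw; subst hw; exact G.irrefl
        have hAcl : ∀ u ∈ ({a, c} : Set V), ∀ w, G.Adj u w → w ∈ D := by
          rintro u hu w h
          rcases hu with rfl | hu
          · rw [hmemD]; exact Or.inl (hadj_a w h)
          · rw [Set.mem_singleton_iff] at hu; subst hu
            rcases hadj_c w h with rfl | rfl | rfl
            · rw [hmemD]; tauto
            · rw [hmemD]; tauto
            · rw [hmemD]; tauto
        have hAdom : ∀ d ∈ D, d ∈ ({a, c} : Set V) ∨ ∃ u ∈ ({a, c} : Set V), G.Adj u d := by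
          intro d hd
          rw [hmemD] at hd
          rcases hd with rfl | rfl | rfl | rfl | rfl
          · exact Or.inr ⟨a, Or.inl rfl, hva.symm⟩
          · exact Or.inl (Or.inl rfl)
          · exact Or.inl (Or.inr rfl)
          · exact Or.inr ⟨c, Or.inr rfl, hcx⟩
          · exact Or.inr ⟨c, Or.inr rfl, hcy⟩
        have hac : a ≠ c := fun h => hca h.symm
        apply main_step G hmin D {a, c} ⟨v, by rw [hmemD]; tauto⟩ hAsub hAind hAcl hAdom 2
          (by rw [Set.ncard_pair hac])
        apply weight_step G D {b}
          (by intro u hu; rw [Set.mem_singleton_iff] at hu; subst hu; exact hbD) hout 2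
        rw [finsum_mem_singleton, finsum_mem_singleton, hDsum, hwv, hwa, hwc, hwx, hwy,
          wtH_drop G D b (by rw [hbdrop, Set.ncard_singleton]) (hsub b), hwb, hbndb]
        all_goals omega
      -- ===== CASE 1'' : b' not leaf, not both x,y leaves; delete {v,a,b,c}, add {v} =====
      · apply case_D4 G hsub hC4 hmin v a b c hv3 ha1 hb2 hNv hNa hca hcb
          (insert b' (insert x {y}))
        · intro u huD hadj
          rcases hadj with h | h
          · rcases hadj_b u h with rfl | rfl
            · exact absurd (by simp : u ∈ ({u, a, b, c} : Set V)) huD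
            · simp
          · rcases hadj_c u h with rfl | rfl | rfl
            · exact absurd (by simp : u ∈ ({u, a, b, c} : Set V)) huD
            · simp
            · simp
        · have hle1 : ∑ u ∈ insert b' (insert x {y}), bnd G u
              ≤ bnd G b' + ∑ u ∈ insert x {y}, bnd G u := sum_insert_le' _ _ _
          have hle2 : ∑ u ∈ insert x {y}, bnd G u ≤ bnd G x + ∑ u ∈ {y}, bnd G u :=
            sum_insert_le' _ _ _
          rw [Finset.sum_singleton] at hle2
          have hb'3 := bnd_le_three G hb'1
          have hxy8 : bnd G x + bnd G y ≤ 8 := by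
            by_cases hx1 : deg G x = 1
            · have hy1 : deg G y ≠ 1 := fun h => hxy1 ⟨hx1, h⟩
              have := bnd_le_five G x
              have := bnd_le_three G hy1
              omega
            · have := bnd_le_three G hx1
              have := bnd_le_five G y
              omega
          rw [hwc]
          omega
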